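/- Proposition B.1 (eigenvalue lower bound for kernels satisfying (A.1)–(A.3)). Assume the kernel k, or its restriction to the unit sphere, satisfies Assumptions (A.1)–(A.3), the data follow the covariance or sphere model in the high-dimensional regime tr(Σ_{d(n)})/n^β → c > 0, the bandwidth is τ = tr(Σ_d), and set m = ⌊2/β⌋. Then g(1,1,1) − Σ_{i=0}^{m} g_i(1,1) > 0, and for every γ > 0 and every fixed ε > 0 there exists N such that for all n ≥ N and every sample x_1,…,x_n ∈ ℝ^{d(n)} satisfying max_{i,j≤n} |x_iᵀx_j/tr(Σ_d) − δ_{ij}| ≤ n^{−β/2}(log n)^{(1+ε)/2} (the event E_X), the minimum eigenvalue of the kernel matrix K satisfies λ_min(K) ≥ g(1,1,1) − Σ_{i=0}^{m} g_i(1,1) − γ. -/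

import Mathlib

open MeasureTheory ProbabilityTheory Filter Matrix
open scoped Topology NNReal ENNReal

noncomputable section
/-- The square root of a positive semidefinite matrix, as `Matrix.PosSemidef.sqrt` was defined
in Mathlib (December 2024). -/
def Matrix.PosSemidef.sqrt {n : Type*} [Fintype n] [DecidableEq n] {A : Matrix n n ℝ}
    (hA : A.PosSemidef) : Matrix n n ℝ :=
  hA.1.eigenvectorUnitary.1 * diagonal ((↑) ∘ (·.sqrt) ∘ hA.1.eigenvalues) *
    (star hA.1.eigenvectorUnitary : Matrix n n ℝ)
def dotp {d : ℕ} (x y : Fin d → ℝ) : ℝ := ∑ i, x i * y i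
def sqnorm {d : ℕ} (x : Fin d → ℝ) : ℝ := dotp x x
def IsCoordDist (ν : Measure ℝ) : Prop :=
  ν = gaussianReal 0 1 ∨
    (IsProbabilityMeasure ν ∧ (∃ C : ℝ, ∀ᵐ x ∂ν, |x| ≤ C) ∧
      (∫ x, x ∂ν) = 0 ∧ (∫ x, x ^ 2 ∂ν) = 1)
def IsCovarianceModel {d : ℕ} (S : Matrix (Fin d) (Fin d) ℝ) (hS : S.PosSemidef)
    (μ : Measure (Fin d → ℝ)) : Prop :=
  ∃ ν : Measure ℝ, IsCoordDist ν ∧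
    μ = (Measure.pi fun _ : Fin d => ν).map (fun w => hS.sqrt.mulVec w)
def IsSphereModel {d : ℕ} (S : Matrix (Fin d) (Fin d) ℝ) (hS : S.PosSemidef)
    (μ : Measure (Fin d → ℝ)) : Prop :=
  ∃ μZ : Measure (Fin d → ℝ), IsCovarianceModel S hS μZ ∧
    μ = μZ.map (fun z => (Real.sqrt S.trace / Real.sqrt (sqnorm z)) • z)
def OpNormOne {d : ℕ} (S : Matrix (Fin d) (Fin d) ℝ) : Prop :=
  IsGreatest {r : ℝ | ∃ x : Fin d → ℝ, sqnorm x = 1 ∧ dotp x (S.mulVec x) = r} 1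
def IsPSDKernel1 (q : ℝ → ℝ → ℝ) : Prop :=
  ∀ (N : ℕ) (u : Fin N → ℝ), (Matrix.of fun a b => q (u a) (u b)).PosSemidef
def AssumptionA1 (g : ℝ → ℝ → ℝ → ℝ) (gj : ℕ → ℝ → ℝ → ℝ) : Prop :=
  (∃ δ > (0:ℝ), ∀ u v t : ℝ, u ∈ Set.Icc (1 - δ) (1 + δ) → v ∈ Set.Icc (1 - δ) (1 + δ) →
      |t| ≤ 1 + δ → HasSum (fun j : ℕ => gj j u v * t ^ j) (g u v t)) ∧
    ∀ j, IsPSDKernel1 (gj j)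
def AssumptionA2 (g : ℝ → ℝ → ℝ → ℝ) : Prop :=
  ∃ δL > (0:ℝ), ∃ L : ℝ≥0, LipschitzOnWith L (fun u => g u u u) (Set.Icc (1 - δL) (1 + δL))
def AssumptionA3 (β : ℝ) (gj : ℕ → ℝ → ℝ → ℝ) : Prop :=
  (∀ i ≤ ⌊2 / β⌋₊, ∃ U ∈ 𝓝 ((1:ℝ), (1:ℝ)),
      ContDiffOn ℝ (⌊2 / β⌋₊ + 1 - i) (fun p : ℝ × ℝ => gj i p.1 p.2) U) ∧
    ∃ J, ⌊2 / β⌋₊ < J ∧ 0 < gj J 1 1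
def kermap {d : ℕ} (g : ℝ → ℝ → ℝ → ℝ) (τ : ℝ) (x y : Fin d → ℝ) : ℝ :=
  g (sqnorm x / τ) (sqnorm y / τ) (dotp x y / τ)
def kernelMatrix {d n : ℕ} (k : (Fin d → ℝ) → (Fin d → ℝ) → ℝ)
    (xs : Fin n → Fin d → ℝ) : Matrix (Fin n) (Fin n) ℝ :=
  Matrix.of fun i j => k (xs i) (xs j)
def ridgeEstimator {d n : ℕ} (k : (Fin d → ℝ) → (Fin d → ℝ) → ℝ) (lam : ℝ)
    (fstar : (Fin d → ℝ) → ℝ) (xs : Fin n → Fin d → ℝ) (x : Fin d → ℝ) : ℝ :=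
  dotProduct (fun i => fstar (xs i))
    (((kernelMatrix k xs + lam • (1 : Matrix (Fin n) (Fin n) ℝ))⁻¹).mulVec
      (fun i => k (xs i) x))
def biasOf {d : ℕ} (est : (Fin d → ℝ) → ℝ) (fstar : (Fin d → ℝ) → ℝ)
    (μ : Measure (Fin d → ℝ)) : ℝ :=
  ∫ x, (est x - fstar x) ^ 2 ∂μ
def polyApproxError (d m : ℕ) (f : (Fin d → ℝ) → ℝ) (μ : Measure (Fin d → ℝ)) : ℝ :=
  ⨅ p : {p : MvPolynomial (Fin d) ℝ // p.totalDegree ≤ m},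
    ∫ x, (f x - MvPolynomial.eval x (p : MvPolynomial (Fin d) ℝ)) ^ 2 ∂μ
def alphaExpG (α : ℝ) (g : ℝ → ℝ → ℝ → ℝ) : Prop :=
  ∀ u v t : ℝ, g u v t = Real.exp (-(u + v - 2 * t) ^ (α / 2))


-- Auxiliary lemmas
lemma aux_psd_quad {q : ℝ → ℝ → ℝ} (hq : IsPSDKernel1 q) {N : ℕ} (u w : Fin N → ℝ) :
    0 ≤ ∑ i, ∑ j, w i * q (u i) (u j) * w j := by
  have h := (hq N u).dotProduct_mulVec_nonneg w
  simp only [dotProduct, mulVec, Matrix.of_apply, Pi.star_apply, star_trivial] at h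
  calc (0:ℝ) ≤ ∑ i, w i * ∑ j, q (u i) (u j) * w j := h
    _ = ∑ i, ∑ j, w i * q (u i) (u j) * w j := by
        refine Finset.sum_congr rfl fun i _ => ?_
        rw [Finset.mul_sum]; exact Finset.sum_congr rfl fun j _ => by ring

lemma aux_diag_nonneg {q : ℝ → ℝ → ℝ} (hq : IsPSDKernel1 q) (a : ℝ) : 0 ≤ q a a := by
  have := aux_psd_quad hq (N := 1) (fun _ => a) (fun _ => 1)
  simpa using this

lemma aux_symm {q : ℝ → ℝ → ℝ} (hq : IsPSDKernel1 q) (a b : ℝ) : q a b = q b a := by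
  have h := (hq 2 ![a, b]).1
  have := congrFun (congrFun h.symm 0) 1
  simpa [Matrix.conjTranspose, Matrix.transpose] using this

lemma aux_offdiag {q : ℝ → ℝ → ℝ} (hq : IsPSDKernel1 q) (a b : ℝ) :
    |q a b| ≤ (q a a + q b b) / 2 := by
  have h1 := aux_psd_quad hq (N := 2) ![a, b] ![1, 1]
  have h2 := aux_psd_quad hq (N := 2) ![a, b] ![1, -1]
  have hsymm := aux_symm hq a b
  simp [Fin.sum_univ_two] at h1 h2
  rw [abs_le]; constructor <;> nlinarith

lemma aux_tendsto (p : ℝ) {r : ℝ} (hr : 0 < r) :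
    Tendsto (fun n : ℕ => (n : ℝ) ^ (-r) * Real.log n ^ p) atTop (𝓝 0) := by
  have h := (isLittleO_log_rpow_rpow_atTop p hr).tendsto_div_nhds_zero
  have h2 : Tendsto (fun n : ℕ => Real.log n ^ p / (n : ℝ) ^ r) atTop (𝓝 0) :=
    h.comp tendsto_natCast_atTop_atTop
  refine h2.congr fun n => ?_
  rw [Real.rpow_neg (Nat.cast_nonneg n), div_eq_mul_inv, mul_comm]

lemma aux_tail {gj : ℕ → ℝ → ℝ → ℝ} (hpsd : ∀ j, IsPSDKernel1 (gj j))
    {a b s ρ M : ℝ} {m : ℕ} {ga gb gab : ℝ}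
    (hga : HasSum (fun k => gj k a a) ga) (hgb : HasSum (fun k => gj k b b) gb)
    (hgab : HasSum (fun k => gj k a b * s ^ k) gab)
    (hsρ : |s| ≤ ρ) (hρ1 : ρ ≤ 1) (hρ0 : 0 ≤ ρ)
    (hMa : ga ≤ M) (hMb : gb ≤ M) :
    |gab - ∑ k ∈ Finset.range (m + 1), gj k a b * s ^ k| ≤ M * ρ ^ (m + 1) := by
  set f : ℕ → ℝ := fun k => gj k a b * s ^ k with hf_def
  set A : ℕ → ℝ := fun k => (gj k a a + gj k b b) / 2 with hA_def
  have hA0 : ∀ k, 0 ≤ A k := fun k => by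
    have := aux_diag_nonneg (hpsd k) a; have := aux_diag_nonneg (hpsd k) b
    simp only [hA_def]; linarith
  have hAsum : HasSum A ((ga + gb) / 2) := (hga.add hgb).div_const 2
  have hfab : ∀ k, |gj k a b| ≤ A k := fun k => aux_offdiag (hpsd k) a b
  have hs1 : |s| ≤ 1 := hsρ.trans hρ1
  have hbd : ∀ k, |f (k + (m + 1))| ≤ A (k + (m + 1)) * ρ ^ (m + 1) := by
    intro k
    have h1 : |f (k + (m + 1))| = |gj (k + (m + 1)) a b| * |s| ^ (k + (m + 1)) := by
      simp [hf_def, abs_mul, abs_pow]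
    rw [h1]
    have h2 : |s| ^ (k + (m + 1)) ≤ |s| ^ (m + 1) :=
      pow_le_pow_of_le_one (abs_nonneg s) hs1 (by omega)
    have h3 : |s| ^ (m + 1) ≤ ρ ^ (m + 1) := pow_le_pow_left₀ (abs_nonneg s) hsρ _
    exact mul_le_mul (hfab _) (h2.trans h3) (by positivity) (hA0 _)
  have hAshift : Summable fun k => A (k + (m + 1)) :=
    (summable_nat_add_iff (m + 1)).2 hAsum.summable
  have hbsum : Summable fun k => A (k + (m + 1)) * ρ ^ (m + 1) := hAshift.mul_right _
  have htail : gab - ∑ k ∈ Finset.range (m + 1), f k = ∑' k, f (k + (m + 1)) := by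
    have := Summable.sum_add_tsum_nat_add (f := f) (m + 1) hgab.summable
    rw [hgab.tsum_eq] at this; linarith
  rw [htail]
  have habs : Summable fun k => |f (k + (m + 1))| :=
    Summable.of_nonneg_of_le (fun k => abs_nonneg _) hbd hbsum
  calc |∑' k, f (k + (m + 1))| ≤ ∑' k, |f (k + (m + 1))| := by
        simpa using norm_tsum_le_tsum_norm (f := fun k => f (k + (m + 1))) (by simpa using habs)
    _ ≤ ∑' k, A (k + (m + 1)) * ρ ^ (m + 1) := Summable.tsum_le_tsum hbd habs hbsum
    _ = (∑' k, A (k + (m + 1))) * ρ ^ (m + 1) := tsum_mul_right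
    _ ≤ M * ρ ^ (m + 1) := by
        refine mul_le_mul_of_nonneg_right ?_ (by positivity)
        have hpart : 0 ≤ ∑ k ∈ Finset.range (m + 1), A k :=
          Finset.sum_nonneg fun k _ => hA0 k
        have := Summable.sum_add_tsum_nat_add (f := A) (m + 1) hAsum.summable
        rw [hAsum.tsum_eq] at this
        linarith

lemma aux_psd_part {q : ℝ → ℝ → ℝ} (hq : IsPSDKernel1 q) {n d : ℕ}
    (xs : Fin n → Fin d → ℝ) (u v : Fin n → ℝ) {τ : ℝ} (hτ : 0 < τ) (k : ℕ) :
    0 ≤ ∑ i, ∑ j, v i * v j * (q (u i) (u j) * (dotp (xs i) (xs j) / τ) ^ k) := by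
  have expand : ∀ i j : Fin n, (dotp (xs i) (xs j)) ^ k =
      ∑ κ : Fin k → Fin d, (∏ s, xs i (κ s)) * (∏ s, xs j (κ s)) := by
    intro i j
    have h1 : (dotp (xs i) (xs j)) ^ k = ∏ _s : Fin k, ∑ l, xs i l * xs j l := by
      rw [Finset.prod_const, dotp]; simp
    rw [h1, Finset.prod_univ_sum, Fintype.piFinset_univ]
    exact Finset.sum_congr rfl fun κ _ => (Finset.prod_mul_distrib)
  have step : ∀ i j : Fin n,
      v i * v j * (q (u i) (u j) * (dotp (xs i) (xs j) / τ) ^ k) =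
      ∑ κ : Fin k → Fin d, (1 / τ ^ k) *
        ((v i * ∏ s, xs i (κ s)) * q (u i) (u j) * (v j * ∏ s, xs j (κ s))) := by
    intro i j
    rw [div_pow, expand i j, Finset.sum_div, Finset.mul_sum, Finset.mul_sum]
    exact Finset.sum_congr rfl fun κ _ => by ring
  calc (0:ℝ) ≤ ∑ κ : Fin k → Fin d, (1 / τ ^ k) *
        ∑ i, ∑ j, (v i * ∏ s, xs i (κ s)) * q (u i) (u j) * (v j * ∏ s, xs j (κ s)) := by
        refine Finset.sum_nonneg fun κ _ => mul_nonneg (by positivity) ?_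
        exact aux_psd_quad hq u (fun i => v i * ∏ s, xs i (κ s))
    _ = ∑ i, ∑ j, v i * v j * (q (u i) (u j) * (dotp (xs i) (xs j) / τ) ^ k) := by
        simp_rw [step, Finset.mul_sum]
        rw [Finset.sum_comm]
        exact Finset.sum_congr rfl fun i _ => Finset.sum_comm
theorem eigenvalue_lower_bound_for_A1_A3_kernels
    -- high-dimensional regime
    (β c : ℝ) (hβ : 0 < β) (hc : 0 < c)
    (d : ℕ → ℕ)
    (S : ∀ n, Matrix (Fin (d n)) (Fin (d n)) ℝ)
    (hS : ∀ n, (S n).PosSemidef) (hSnorm : ∀ n, OpNormOne (S n))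
    (hreg : Tendsto (fun n => (S n).trace / (n : ℝ) ^ β) atTop (𝓝 c))
    -- the kernel satisfies Assumptions (A.1)-(A.3)
    (g : ℝ → ℝ → ℝ → ℝ) (gj : ℕ → ℝ → ℝ → ℝ)
    (hgcont : Continuous fun p : ℝ × ℝ × ℝ => g p.1 p.2.1 p.2.2)
    (hker : AssumptionA1 g gj ∧ AssumptionA2 g ∧ AssumptionA3 β gj) :
    -- conclusion, with m = ⌊2/β⌋:
    (0 < g 1 1 1 - ∑ i ∈ Finset.range (⌊2 / β⌋₊ + 1), gj i 1 1) ∧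
    ∀ γ : ℝ, 0 < γ → ∀ ε : ℝ, 0 < ε → ∃ N : ℕ, ∀ n ≥ N,
      ∀ xs : Fin n → (Fin (d n) → ℝ),
        -- the concentration event E_X for the sample
        (∀ i j : Fin n,
          |dotp (xs i) (xs j) / (S n).trace - (if i = j then (1:ℝ) else 0)| ≤
            (n : ℝ) ^ (-(β / 2)) * Real.log n ^ ((1 + ε) / 2)) →
        -- λ_min(K) ≥ g(1,1,1) − Σ_{i=0}^m g_i(1,1) − γ, as a quadratic-form bound
        ∀ v : Fin n → ℝ,
          (g 1 1 1 - (∑ i ∈ Finset.range (⌊2 / β⌋₊ + 1), gj i 1 1) - γ) * (∑ i, v i ^ 2) ≤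
            dotProduct v
              ((kernelMatrix (kermap g ((S n).trace)) xs).mulVec v) := by
  obtain ⟨hA1, _hA2, hA3⟩ := hker
  obtain ⟨⟨δ, hδ, hsum⟩, hpsd⟩ := hA1
  obtain ⟨hA3s, J, hJm, hJpos⟩ := hA3
  set m := ⌊2 / β⌋₊ with hm
  have h1mem : (1:ℝ) ∈ Set.Icc (1 - δ) (1 + δ) := by constructor <;> linarith
  have habs1 : |(1:ℝ)| ≤ 1 + δ := by rw [abs_one]; linarith
  have hsum11 : HasSum (fun j => gj j 1 1) (g 1 1 1) := by
    have := hsum 1 1 1 h1mem h1mem habs1; simpa using this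
  have hdnn : ∀ k (w : ℝ), 0 ≤ gj k w w := fun k w => aux_diag_nonneg (hpsd k) w
  have hpos : 0 < g 1 1 1 - ∑ i ∈ Finset.range (m + 1), gj i 1 1 := by
    have hJnot : J ∉ Finset.range (m + 1) := by simp; omega
    have hle : ∑ i ∈ insert J (Finset.range (m + 1)), gj i 1 1 ≤ g 1 1 1 :=
      sum_le_hasSum _ (fun i _ => hdnn i 1) hsum11
    rw [Finset.sum_insert hJnot] at hle
    linarith
  refine ⟨hpos, ?_⟩
  intro γ hγ ε hε
  set lam0 := g 1 1 1 - ∑ i ∈ Finset.range (m + 1), gj i 1 1 with hlam0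
  set M := g 1 1 1 + 1 with hMdef
  have hg111 : 0 ≤ g 1 1 1 := hsum11.nonneg fun k => hdnn k 1
  have hM0 : 0 < M := by rw [hMdef]; linarith
  -- continuity of φ at 1, giving η₂
  have hφc : ContinuousAt
      (fun w : ℝ => g w w w - ∑ i ∈ Finset.range (m + 1), gj i w w * w ^ i) 1 := by
    have hgc : ContinuousAt (fun w : ℝ => g w w w) 1 := by
      have : Continuous fun w : ℝ => g w w w :=
        hgcont.comp (continuous_id.prodMk (continuous_id.prodMk continuous_id))
      exact this.continuousAt
    refine hgc.sub ?_
    have hterm : ∀ i ∈ Finset.range (m + 1),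
        ContinuousAt (fun w : ℝ => gj i w w * w ^ i) 1 := by
      intro i hi
      have him : i ≤ m := by
        have := Finset.mem_range.mp hi; omega
      obtain ⟨U, hU, hcd⟩ := hA3s i him
      have h1 : ContinuousAt (fun p : ℝ × ℝ => gj i p.1 p.2) (1, 1) :=
        (hcd.continuousOn).continuousAt hU
      have h2 : ContinuousAt (fun w : ℝ => gj i w w) 1 :=
        ContinuousAt.comp (f := fun w : ℝ => (w, w))
          (g := fun p : ℝ × ℝ => gj i p.1 p.2) h1
          (continuous_id.prodMk continuous_id).continuousAt
      exact h2.mul (continuous_pow i).continuousAt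
    exact tendsto_finset_sum _ hterm
  have hφ1 : (fun w : ℝ => g w w w - ∑ i ∈ Finset.range (m + 1), gj i w w * w ^ i) 1
      = lam0 := by simp [hlam0]
  have hφev : ∀ᶠ w in 𝓝 (1:ℝ),
      lam0 - γ / 2 < g w w w - ∑ i ∈ Finset.range (m + 1), gj i w w * w ^ i :=
    hφc.eventually_const_lt (by rw [hφ1]; linarith)
  obtain ⟨η₂, hη₂, hφlb⟩ := Metric.eventually_nhds_iff.mp hφev
  -- boundedness of g w w 1 near 1, giving η₁
  have hψev : ∀ᶠ w in 𝓝 (1:ℝ), g w w 1 < M := by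
    have hψc : ContinuousAt (fun w : ℝ => g w w 1) 1 := by
      have : Continuous fun w : ℝ => g w w 1 :=
        hgcont.comp (continuous_id.prodMk (continuous_id.prodMk continuous_const))
      exact this.continuousAt
    exact hψc.eventually_lt_const (by rw [hMdef]; show g 1 1 1 < g 1 1 1 + 1; linarith)
  obtain ⟨η₁, hη₁, hMub⟩ := Metric.eventually_nhds_iff.mp hψev
  -- limits
  set ρ : ℕ → ℝ := fun n => (n : ℝ) ^ (-(β / 2)) * Real.log n ^ ((1 + ε) / 2) with hρdef
  have htend1 : Tendsto ρ atTop (𝓝 0) := aux_tendsto _ (by linarith)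
  have h2β : 2 / β < (m : ℝ) + 1 := by
    rw [hm]; exact_mod_cast Nat.lt_floor_add_one (2 / β)
  have hr2 : 0 < β / 2 * ((m : ℝ) + 1) - 1 := by
    rw [div_lt_iff₀ hβ] at h2β; nlinarith
  clear_value m
  have htend2 : Tendsto (fun n : ℕ => (n : ℝ) * ρ n ^ (m + 1)) atTop (𝓝 0) := by
    have base := aux_tendsto ((1 + ε) / 2 * ((m : ℝ) + 1)) hr2
    refine base.congr' ?_
    filter_upwards [eventually_ge_atTop 1] with n hn
    have hn0 : (0:ℝ) < n := by exact_mod_cast hn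
    have hn1 : (1:ℝ) ≤ n := by exact_mod_cast hn
    have hlog : 0 ≤ Real.log n := Real.log_nonneg hn1
    have e1 : ((n : ℝ) ^ (-(β / 2))) ^ (m + 1) = (n : ℝ) ^ (-(β / 2) * ((m : ℝ) + 1)) := by
      rw [← Real.rpow_natCast ((n : ℝ) ^ (-(β / 2))) (m + 1), ← Real.rpow_mul hn0.le]
      push_cast; ring_nf
    have e2 : (Real.log n ^ ((1 + ε) / 2)) ^ (m + 1)
        = Real.log n ^ ((1 + ε) / 2 * ((m : ℝ) + 1)) := by
      rw [← Real.rpow_natCast (Real.log n ^ ((1 + ε) / 2)) (m + 1), ← Real.rpow_mul hlog]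
      push_cast; ring_nf
    have e3 : (n : ℝ) * (n : ℝ) ^ (-(β / 2) * ((m : ℝ) + 1))
        = (n : ℝ) ^ (-(β / 2 * ((m : ℝ) + 1) - 1)) := by
      rw [← Real.rpow_one_add' hn0.le (by nlinarith)]
      ring_nf
    calc (n : ℝ) ^ (-(β / 2 * ((m : ℝ) + 1) - 1)) * Real.log n ^ ((1 + ε) / 2 * ((m : ℝ) + 1))
        = ((n : ℝ) * (n : ℝ) ^ (-(β / 2) * ((m : ℝ) + 1))) *
            (Real.log n ^ ((1 + ε) / 2)) ^ (m + 1) := by rw [e2, e3]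
      _ = (n : ℝ) * ρ n ^ (m + 1) := by
          rw [hρdef]; rw [mul_pow, e1]; ring
  -- trace positivity eventually
  have htr : ∀ᶠ n : ℕ in atTop, 0 < (S n).trace := by
    have h1 : ∀ᶠ n : ℕ in atTop, c / 2 < (S n).trace / (n : ℝ) ^ β :=
      hreg.eventually (eventually_gt_nhds (by linarith))
    filter_upwards [h1, eventually_ge_atTop 1] with n hn1 hn2
    have hn0 : (0:ℝ) < n := by exact_mod_cast hn2
    have hnb : (0:ℝ) < (n : ℝ) ^ β := Real.rpow_pos_of_pos hn0 β
    have : 0 < (S n).trace / (n : ℝ) ^ β := by linarith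
    rcases div_pos_iff.mp this with ⟨h, _⟩ | ⟨_, h⟩
    · exact h
    · linarith
  -- gather all eventual conditions
  have hev : ∀ᶠ n : ℕ in atTop, 1 ≤ n ∧ ρ n < δ ∧ ρ n < η₁ ∧ ρ n < η₂ ∧ ρ n ≤ 1 ∧
      M * ((n : ℝ) * ρ n ^ (m + 1)) ≤ γ / 2 ∧ 0 < (S n).trace := by
    have e1 := htend1.eventually (eventually_lt_nhds hδ)
    have e2 := htend1.eventually (eventually_lt_nhds hη₁)
    have e3 := htend1.eventually (eventually_lt_nhds hη₂)
    have e4 := htend1.eventually (eventually_lt_nhds one_pos)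
    have e5 : Tendsto (fun n : ℕ => M * ((n : ℝ) * ρ n ^ (m + 1))) atTop (𝓝 0) := by
      simpa using htend2.const_mul M
    have e6 := e5.eventually (eventually_lt_nhds (by linarith : (0:ℝ) < γ / 2))
    filter_upwards [eventually_ge_atTop 1, e1, e2, e3, e4, e6, htr] with n a1 a2 a3 a4 a5 a6 a7
    exact ⟨a1, a2, a3, a4, a5.le, a6.le, a7⟩
  obtain ⟨N, hN⟩ := eventually_atTop.mp hev
  refine ⟨N, fun n hn xs hEx v => ?_⟩
  obtain ⟨hn1, hρδ, hρη₁, hρη₂, hρ1, hMρ, hτ⟩ := hN n hn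
  set τ := (S n).trace with hτdef
  clear_value lam0 M
  set t : Fin n → Fin n → ℝ := fun i j => dotp (xs i) (xs j) / τ with htdef
  set u : Fin n → ℝ := fun i => t i i with hudef
  have htii : ∀ i, t i i = u i := fun i => rfl
  have hE' : ∀ i j : Fin n, |t i j - if i = j then (1:ℝ) else 0| ≤ ρ n := fun i j => hEx i j
  clear_value t u ρ
  have hρ0 : 0 ≤ ρ n := by
    have hn0 : (1:ℝ) ≤ n := by exact_mod_cast hn1
    have := Real.log_nonneg hn0
    rw [hρdef]
    positivity
  have hdiagE : ∀ i : Fin n, |u i - 1| ≤ ρ n := by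
    intro i; have := hE' i i; simpa [htii i] using this
  have hoffE : ∀ i j : Fin n, i ≠ j → |t i j| ≤ ρ n := by
    intro i j hij; have := hE' i j; simpa [hij] using this
  have hu_mem : ∀ i : Fin n, u i ∈ Set.Icc (1 - δ) (1 + δ) := by
    intro i
    have h := abs_le.mp (hdiagE i)
    constructor <;> [linarith [h.1, hρδ]; linarith [h.2, hρδ]]
  have ht_le : ∀ i j : Fin n, |t i j| ≤ 1 + δ := by
    intro i j
    by_cases hij : i = j
    · subst hij
      rw [htii i]
      have h := abs_le.mp (hdiagE i)
      rw [abs_le]; constructor <;> [linarith [h.1]; linarith [h.2, hρδ]]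
    · have := hoffE i j hij; linarith [hρδ, (abs_le.mp this).1, (abs_le.mp this).2,
        abs_le.mp (hoffE i j hij) |>.1]
  have hhs : ∀ i j : Fin n,
      HasSum (fun k => gj k (u i) (u j) * t i j ^ k) (g (u i) (u j) (t i j)) :=
    fun i j => hsum _ _ _ (hu_mem i) (hu_mem j) (ht_le i j)
  have hhs1 : ∀ w : ℝ, w ∈ Set.Icc (1 - δ) (1 + δ) →
      HasSum (fun k => gj k w w) (g w w 1) := by
    intro w hw; have := hsum w w 1 hw hw habs1; simpa using this
  -- the decomposition
  set P : Fin n → Fin n → ℝ :=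
    fun i j => ∑ k ∈ Finset.range (m + 1), gj k (u i) (u j) * t i j ^ k with hPdef
  set R : Fin n → Fin n → ℝ := fun i j => g (u i) (u j) (t i j) - P i j with hRdef
  clear_value P R
  have hRHSeq : dotProduct v ((kernelMatrix (kermap g τ) xs).mulVec v)
      = ∑ i, ∑ j, v i * v j * g (u i) (u j) (t i j) := by
    simp only [dotProduct, mulVec, kernelMatrix, kermap, Matrix.of_apply, sqnorm,
      htdef, hudef]
    refine Finset.sum_congr rfl fun i _ => ?_
    rw [Finset.mul_sum]
    exact Finset.sum_congr rfl fun j _ => by ring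
  have hsplit : ∑ i, ∑ j, v i * v j * g (u i) (u j) (t i j)
      = (∑ i, ∑ j, v i * v j * P i j) + ∑ i, ∑ j, v i * v j * R i j := by
    rw [← Finset.sum_add_distrib]
    refine Finset.sum_congr rfl fun i _ => ?_
    rw [← Finset.sum_add_distrib]
    refine Finset.sum_congr rfl fun j _ => ?_
    simp only [hRdef]; ring
  have hPnn : 0 ≤ ∑ i, ∑ j, v i * v j * P i j := by
    have hswap : ∑ i, ∑ j, v i * v j * P i j
        = ∑ k ∈ Finset.range (m + 1), ∑ i, ∑ j,
            v i * v j * (gj k (u i) (u j) * t i j ^ k) := by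
      simp_rw [hPdef, Finset.mul_sum]
      calc ∑ i, ∑ j, ∑ k ∈ Finset.range (m + 1),
              v i * v j * (gj k (u i) (u j) * t i j ^ k)
          = ∑ i, ∑ k ∈ Finset.range (m + 1), ∑ j,
              v i * v j * (gj k (u i) (u j) * t i j ^ k) :=
            Finset.sum_congr rfl fun i _ => Finset.sum_comm
        _ = ∑ k ∈ Finset.range (m + 1), ∑ i, ∑ j,
              v i * v j * (gj k (u i) (u j) * t i j ^ k) := Finset.sum_comm
    rw [hswap]
    refine Finset.sum_nonneg fun k _ => ?_
    have := aux_psd_part (hpsd k) xs u v hτ k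
    simpa [htdef] using this
  have hdiagR : ∀ i : Fin n, lam0 - γ / 2 < R i i := by
    intro i
    have hdist : dist (u i) 1 < η₂ := by
      rw [Real.dist_eq]; exact lt_of_le_of_lt (hdiagE i) hρη₂
    have := hφlb hdist
    simp only [hRdef, hPdef, htii i]
    exact this
  have hMu : ∀ i : Fin n, g (u i) (u i) 1 ≤ M := by
    intro i
    have hdist : dist (u i) 1 < η₁ := by
      rw [Real.dist_eq]; exact lt_of_le_of_lt (hdiagE i) hρη₁
    exact (hMub hdist).le
  have hoffR : ∀ i j : Fin n, i ≠ j → |R i j| ≤ M * ρ n ^ (m + 1) := by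
    intro i j hij
    simp only [hRdef, hPdef]
    exact aux_tail hpsd (hhs1 (u i) (hu_mem i)) (hhs1 (u j) (hu_mem j)) (hhs i j)
      (hoffE i j hij) hρ1 hρ0 (hMu i) (hMu j)
  -- lower bound for the R part
  have hRlow : (lam0 - γ / 2) * (∑ i, v i ^ 2)
        - (M * ρ n ^ (m + 1)) * (∑ i, |v i|) ^ 2
      ≤ ∑ i, ∑ j, v i * v j * R i j := by
    have key : ∀ i : Fin n,
        (lam0 - γ / 2) * v i ^ 2 - (M * ρ n ^ (m + 1)) * (|v i| * ∑ j, |v j|)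
        ≤ ∑ j, v i * v j * R i j := by
      intro i
      have hsplit_i : ∑ j, v i * v j * R i j
          = v i * v i * R i i + ∑ j ∈ Finset.univ.erase i, v i * v j * R i j :=
        (Finset.add_sum_erase _ _ (Finset.mem_univ i)).symm
      rw [hsplit_i]
      have h1 : (lam0 - γ / 2) * v i ^ 2 ≤ v i * v i * R i i := by
        have hmul := mul_le_mul_of_nonneg_left (hdiagR i).le (sq_nonneg (v i))
        calc (lam0 - γ / 2) * v i ^ 2 = v i ^ 2 * (lam0 - γ / 2) := by ring
          _ ≤ v i ^ 2 * R i i := hmul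
          _ = v i * v i * R i i := by ring
      have hcnn : 0 ≤ M * ρ n ^ (m + 1) := mul_nonneg hM0.le (pow_nonneg hρ0 _)
      have h2 : -((M * ρ n ^ (m + 1)) * (|v i| * ∑ j, |v j|))
          ≤ ∑ j ∈ Finset.univ.erase i, v i * v j * R i j := by
        have hb : ∀ j ∈ Finset.univ.erase i,
            -((M * ρ n ^ (m + 1)) * (|v i| * |v j|)) ≤ v i * v j * R i j := by
          intro j hj
          have hij : j ≠ i := Finset.ne_of_mem_erase hj
          have h3 := hoffR i j (Ne.symm hij)
          have h4 : |v i * v j * R i j| ≤ |v i| * |v j| * (M * ρ n ^ (m + 1)) := by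
            rw [abs_mul, abs_mul]
            exact mul_le_mul_of_nonneg_left h3 (mul_nonneg (abs_nonneg _) (abs_nonneg _))
          have h5 := neg_abs_le (v i * v j * R i j)
          have h6 : -((M * ρ n ^ (m + 1)) * (|v i| * |v j|))
              = -(|v i| * |v j| * (M * ρ n ^ (m + 1))) := by ring
          rw [h6]
          linarith [h4, h5]
        have hsum_b : ∑ j ∈ Finset.univ.erase i,
            -((M * ρ n ^ (m + 1)) * (|v i| * |v j|))
            ≤ ∑ j ∈ Finset.univ.erase i, v i * v j * R i j := Finset.sum_le_sum hb
        have herase : ∑ j ∈ Finset.univ.erase i, (M * ρ n ^ (m + 1)) * (|v i| * |v j|)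
            ≤ (M * ρ n ^ (m + 1)) * (|v i| * ∑ j, |v j|) := by
          have hsub : ∑ j ∈ Finset.univ.erase i, (M * ρ n ^ (m + 1)) * (|v i| * |v j|)
              ≤ ∑ j, (M * ρ n ^ (m + 1)) * (|v i| * |v j|) :=
            Finset.sum_le_sum_of_subset_of_nonneg (Finset.erase_subset _ _)
              (fun j _ _ => mul_nonneg hcnn (mul_nonneg (abs_nonneg _) (abs_nonneg _)))
          calc ∑ j ∈ Finset.univ.erase i, (M * ρ n ^ (m + 1)) * (|v i| * |v j|)
              ≤ ∑ j, (M * ρ n ^ (m + 1)) * (|v i| * |v j|) := hsub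
            _ = (M * ρ n ^ (m + 1)) * (|v i| * ∑ j, |v j|) := by
                rw [← Finset.mul_sum, ← Finset.mul_sum]
        rw [Finset.sum_neg_distrib] at hsum_b
        linarith
      linarith
    calc (lam0 - γ / 2) * (∑ i, v i ^ 2) - (M * ρ n ^ (m + 1)) * (∑ i, |v i|) ^ 2
        = ∑ i, ((lam0 - γ / 2) * v i ^ 2
            - (M * ρ n ^ (m + 1)) * (|v i| * ∑ j, |v j|)) := by
          have e1 : (lam0 - γ / 2) * (∑ i, v i ^ 2)
              = ∑ i, (lam0 - γ / 2) * v i ^ 2 := Finset.mul_sum _ _ _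
          have e2 : (M * ρ n ^ (m + 1)) * (∑ i, |v i|) ^ 2
              = ∑ i, (M * ρ n ^ (m + 1)) * (|v i| * ∑ j, |v j|) := by
            rw [sq, Finset.sum_mul, Finset.mul_sum]
          rw [e1, e2, ← Finset.sum_sub_distrib]
      _ ≤ ∑ i, ∑ j, v i * v j * R i j := Finset.sum_le_sum fun i _ => key i
  have hCS : (∑ i, |v i|) ^ 2 ≤ (n : ℝ) * ∑ i, v i ^ 2 := by
    have h := sq_sum_le_card_mul_sum_sq (s := Finset.univ) (f := fun i : Fin n => |v i|)
    simpa [sq_abs, Finset.card_univ] using h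
  have herr : (M * ρ n ^ (m + 1)) * (∑ i, |v i|) ^ 2 ≤ (γ / 2) * ∑ i, v i ^ 2 := by
    have hcnn : 0 ≤ M * ρ n ^ (m + 1) := mul_nonneg hM0.le (pow_nonneg hρ0 _)
    have h1 : (M * ρ n ^ (m + 1)) * (∑ i, |v i|) ^ 2
        ≤ (M * ρ n ^ (m + 1)) * ((n : ℝ) * ∑ i, v i ^ 2) :=
      mul_le_mul_of_nonneg_left hCS hcnn
    have hvnn : 0 ≤ ∑ i, v i ^ 2 := Finset.sum_nonneg fun i _ => sq_nonneg _
    have h2 : (M * ρ n ^ (m + 1)) * ((n : ℝ) * ∑ i, v i ^ 2)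
        = (M * ((n : ℝ) * ρ n ^ (m + 1))) * ∑ i, v i ^ 2 := by ring
    have h3 : (M * ((n : ℝ) * ρ n ^ (m + 1))) * ∑ i, v i ^ 2
        ≤ (γ / 2) * ∑ i, v i ^ 2 := mul_le_mul_of_nonneg_right hMρ hvnn
    linarith
  rw [hRHSeq, hsplit]
  have hexp : (lam0 - γ) * (∑ i, v i ^ 2)
      = (lam0 - γ / 2) * (∑ i, v i ^ 2) - (γ / 2) * (∑ i, v i ^ 2) := by ring
  linarith [hPnn, hRlow, herr]
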